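/- Let ψ(θ) = (1/√2)·(cos(θ/2), sin(θ/2), −sin(θ/2), cos(θ/2)) ∈ ℂ⁴, let H = diag(0,1,1,2), and let X(θ) be the random variable taking value H_{j,j} with probability |ψ(θ)_j|² for j ∈ {0,1,2,3} (so X(θ) = 0 with probability cos²(θ/2)/2, X(θ) = 1 with probability sin²(θ/2), and X(θ) = 2 with probability cos²(θ/2)/2). Then for every θ ∈ ℝ, CVaR_{1/2}(X(θ)) = sin²(θ/2). -/

import Mathlib

open scoped Classical

/-- The lower `α`-quantile `q_α = inf { x : P(X ≤ x) ≥ α }` of a random variable `X` on a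
finite probability space with probability mass function `p`. -/
noncomputable def lowerQuantile {Ω : Type*} [Fintype Ω] (p : Ω → ℝ) (X : Ω → ℝ) (α : ℝ) : ℝ :=
  sInf {x : ℝ | α ≤ ∑ ω ∈ Finset.univ.filter (fun ω => X ω ≤ x), p ω}

/-- The Conditional Value-at-Risk
`CVaR_α(X) = (1/α)·( E[X·1_{X < q_α}] + q_α·(α − P(X < q_α)) )`
of a random variable `X` on a finite probability space with probability mass function `p`. -/
noncomputable def cvar {Ω : Type*} [Fintype Ω] (p : Ω → ℝ) (X : Ω → ℝ) (α : ℝ) : ℝ :=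
  (1 / α) *
    ((∑ ω ∈ Finset.univ.filter (fun ω => X ω < lowerQuantile p X α), p ω * X ω) +
      lowerQuantile p X α *
        (α - ∑ ω ∈ Finset.univ.filter (fun ω => X ω < lowerQuantile p X α), p ω))

/-- `ψ(θ) = (1/√2)·(cos(θ/2), sin(θ/2), −sin(θ/2), cos(θ/2)) ∈ ℂ⁴`. -/
noncomputable def psi (θ : ℝ) : Fin 4 → ℂ :=
  ![((Real.cos (θ / 2) / Real.sqrt 2 : ℝ) : ℂ),
    ((Real.sin (θ / 2) / Real.sqrt 2 : ℝ) : ℂ),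
    ((-(Real.sin (θ / 2)) / Real.sqrt 2 : ℝ) : ℂ),
    ((Real.cos (θ / 2) / Real.sqrt 2 : ℝ) : ℂ)]


lemma Fsum (c s x : ℝ) :
    ∑ ω ∈ Finset.univ.filter (fun ω => (fun j : Fin 4 => (![0,1,1,2] : Fin 4 → ℝ) j) ω ≤ x),
      (![c/2, s/2, s/2, c/2] : Fin 4 → ℝ) ω
    = (if (0:ℝ) ≤ x then c/2 else 0) + (if (1:ℝ) ≤ x then s else 0)
      + (if (2:ℝ) ≤ x then c/2 else 0) := by
  rw [Finset.sum_filter, Fin.sum_univ_four]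
  by_cases h0 : (0:ℝ) ≤ x <;> by_cases h1 : (1:ℝ) ≤ x <;> by_cases h2 : (2:ℝ) ≤ x <;>
    simp [h0, h1, h2] <;> ring

lemma quantile_eq (c s : ℝ) (hc0 : 0 ≤ c) (hcs : c + s = 1) (hs : 0 < s) :
    lowerQuantile (![c/2, s/2, s/2, c/2] : Fin 4 → ℝ)
      (fun j : Fin 4 => (![0,1,1,2] : Fin 4 → ℝ) j) (1/2) = 1 := by
  have hc1 : c < 1 := by linarith
  have hset : {x : ℝ | (1:ℝ)/2 ≤ ∑ ω ∈ Finset.univ.filter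
      (fun ω => (fun j : Fin 4 => (![0,1,1,2] : Fin 4 → ℝ) j) ω ≤ x),
      (![c/2, s/2, s/2, c/2] : Fin 4 → ℝ) ω} = Set.Ici (1:ℝ) := by
    ext x
    simp only [Set.mem_setOf_eq, Set.mem_Ici, Fsum]
    constructor
    · intro h
      by_contra hx
      push_neg at hx
      by_cases h0 : (0:ℝ) ≤ x
      · have h1 : ¬ (1:ℝ) ≤ x := by linarith
        have h2 : ¬ (2:ℝ) ≤ x := by linarith
        simp [h0, h1, h2] at h; linarith
      · have h1 : ¬ (1:ℝ) ≤ x := by linarith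
        have h2 : ¬ (2:ℝ) ≤ x := by linarith
        simp [h0, h1, h2] at h; linarith
    · intro h
      have h0 : (0:ℝ) ≤ x := by linarith
      by_cases h2 : (2:ℝ) ≤ x <;> simp [h0, h, h2] <;> linarith
  rw [lowerQuantile, hset, csInf_Ici]

lemma quantile_eq0 (c : ℝ) (hc : c = 1) :
    lowerQuantile (![c/2, (0:ℝ)/2, (0:ℝ)/2, c/2] : Fin 4 → ℝ)
      (fun j : Fin 4 => (![0,1,1,2] : Fin 4 → ℝ) j) (1/2) = 0 := by
  subst hc
  have hset : {x : ℝ | (1:ℝ)/2 ≤ ∑ ω ∈ Finset.univ.filter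
      (fun ω => (fun j : Fin 4 => (![0,1,1,2] : Fin 4 → ℝ) j) ω ≤ x),
      (![(1:ℝ)/2, (0:ℝ)/2, (0:ℝ)/2, (1:ℝ)/2] : Fin 4 → ℝ) ω} = Set.Ici (0:ℝ) := by
    ext x
    simp only [Set.mem_setOf_eq, Set.mem_Ici, Fsum]
    constructor
    · intro h
      by_contra hx
      push_neg at hx
      have h0 : ¬ (0:ℝ) ≤ x := not_le.mpr hx
      have h1 : ¬ (1:ℝ) ≤ x := by linarith
      have h2 : ¬ (2:ℝ) ≤ x := by linarith
      simp [h0, h1, h2] at h; linarith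
    · intro h
      by_cases h1 : (1:ℝ) ≤ x <;> by_cases h2 : (2:ℝ) ≤ x <;> simp [h, h1, h2] <;> linarith
  rw [lowerQuantile, hset, csInf_Ici]

/-- For `H = diag(0,1,1,2)` and the random variable `X(θ)` taking value `H_{j,j}` with
probability `|ψ(θ)_j|²`, one has `CVaR_{1/2}(X(θ)) = sin²(θ/2)` for every `θ`. -/
theorem cvar_half_eq_sin_sq (θ : ℝ) :
    cvar (fun j : Fin 4 => ‖psi θ j‖ ^ 2)
      (fun j : Fin 4 => (![0, 1, 1, 2] : Fin 4 → ℝ) j) (1 / 2) =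
      Real.sin (θ / 2) ^ 2 := by
  set c := Real.cos (θ/2) ^ 2 with hcdef
  set s := Real.sin (θ/2) ^ 2 with hsdef
  have hcs : c + s = 1 := by rw [hcdef, hsdef, add_comm]; exact Real.sin_sq_add_cos_sq _
  have hc0 : 0 ≤ c := sq_nonneg _
  have hs0 : 0 ≤ s := sq_nonneg _
  have hp : (fun j : Fin 4 => ‖psi θ j‖ ^ 2)
      = (![c/2, s/2, s/2, c/2] : Fin 4 → ℝ) := by
    funext j
    have key : ∀ r : ℝ, ‖((r / Real.sqrt 2 : ℝ) : ℂ)‖ ^ 2 = r ^ 2 / 2 := by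
      intro r
      rw [Complex.norm_real, Real.norm_eq_abs, sq_abs, div_pow, Real.sq_sqrt (by norm_num : (0:ℝ) ≤ 2)]
    fin_cases j
    · exact key _
    · exact key _
    · show ‖((-(Real.sin (θ / 2)) / Real.sqrt 2 : ℝ) : ℂ)‖ ^ 2
        = Real.sin (θ / 2) ^ 2 / 2
      rw [key]; ring
    · exact key _
  rw [hp]
  by_cases hs : s = 0
  · have hc1 : c = 1 := by linarith
    rw [hs, cvar, quantile_eq0 c hc1]
    have hfilt : Finset.univ.filter
        (fun ω : Fin 4 => (fun j : Fin 4 => (![0,1,1,2] : Fin 4 → ℝ) j) ω < 0) = ∅ := by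
      ext j; fin_cases j <;> simp
    rw [hfilt]
    simp
  · have hspos : 0 < s := lt_of_le_of_ne hs0 (Ne.symm hs)
    rw [cvar, quantile_eq c s hc0 hcs hspos]
    have hfilt : Finset.univ.filter
        (fun ω : Fin 4 => (fun j : Fin 4 => (![0,1,1,2] : Fin 4 → ℝ) j) ω < 1)
        = {(0 : Fin 4)} := by
      ext j; fin_cases j <;> simp
    rw [hfilt]
    simp only [Finset.sum_singleton]
    norm_num
    linarith
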